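/- In the two-sample ADF model with k₁ = k₂ = k, assume n₁/N → κ ∈ (0,1) as min(n₁,n₂) → ∞. Then the pooled variance estimator σ̂² = (n₂/N)·(n₁−1)^{−1} Σ_{i=1}^{n₁}(δ(Σ̂₁)'(S_{i1} − vec(Σ̂₁)))² + (n₁/N)·(n₂−1)^{−1} Σ_{i=1}^{n₂}(δ(Σ̂₂)'(S_{i2} − vec(Σ̂₂)))² converges in probability to σ̃² = (1−κ)·σ̃₁² + κ·σ̃₂², where σ̃_j² = δ(Σ_j)'·Cov(vec(Y_j Y_j'))·δ(Σ_j) and Y_j is a generic observation from sample j. -/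

import Mathlib

open MeasureTheory ProbabilityTheory Filter Matrix Finset Asymptotics

noncomputable section

open scoped Classical in
/-- Index set for the on-and-below-diagonal entries of a `k × k` matrix;
its cardinality is `q = k(k+1)/2`. -/
abbrev SymIdx (k : ℕ) : Type := {p : Fin k × Fin k // (p.2 : ℕ) ≤ (p.1 : ℕ)}

/-- `vec(Σ)`: the vector of on-and-below-diagonal entries of a matrix. -/
def vecm {k : ℕ} (S : Matrix (Fin k) (Fin k) ℝ) : SymIdx k → ℝ := fun p => S p.1.1 p.1.2

/-- Reconstruct a symmetric matrix from its on-and-below-diagonal entries. -/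
def unvec {k : ℕ} (v : SymIdx k → ℝ) : Matrix (Fin k) (Fin k) ℝ :=
  Matrix.of fun i j =>
    if h : (j : ℕ) ≤ (i : ℕ) then v ⟨(i, j), h⟩ else v ⟨(j, i), le_of_not_ge h⟩

/-- `1'Σ1`, the sum of all entries of a matrix. -/
def oneSum {k : ℕ} (S : Matrix (Fin k) (Fin k) ℝ) : ℝ := ∑ i, ∑ j, S i j

/-- Cronbach's coefficient alpha `α_C(Σ) = (k/(k-1))·(1 - tr(Σ)/(1'Σ1))`. -/
def alphaC {k : ℕ} (S : Matrix (Fin k) (Fin k) ℝ) : ℝ :=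
  ((k : ℝ) / ((k : ℝ) - 1)) * (1 - S.trace / oneSum S)

/-- Cronbach's alpha as a function of `vec(Σ)`. -/
def alphaVec (k : ℕ) : (SymIdx k → ℝ) → ℝ := fun v => alphaC (unvec v)

/-- The gradient `δ(Σ)` of `vec(Σ) ↦ α_C(Σ)` at `vec(Σ)`. -/
def deltaVec {k : ℕ} (S : Matrix (Fin k) (Fin k) ℝ) : SymIdx k → ℝ :=
  fun p => fderiv ℝ (alphaVec k) (vecm S) (Pi.single p 1)

/-- Outer product `x x'`. -/
def outer {k : ℕ} (x : Fin k → ℝ) : Matrix (Fin k) (Fin k) ℝ := Matrix.of fun a b => x a * x b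

/-- Sample mean of the first `n` observations. -/
def sampleMean (k n : ℕ) (X : ℕ → Fin k → ℝ) : Fin k → ℝ :=
  (n : ℝ)⁻¹ • ∑ i ∈ range n, X i

/-- Sample covariance matrix of the first `n` observations. -/
def sampleCov (k n : ℕ) (X : ℕ → Fin k → ℝ) : Matrix (Fin k) (Fin k) ℝ :=
  ((n : ℝ) - 1)⁻¹ • ∑ i ∈ range n, outer (fun a => X i a - sampleMean k n X a)

/-- Convergence in distribution: weak convergence of the laws. -/
def TendstoInDistribution {Ω E : Type*} [MeasurableSpace Ω] [MeasurableSpace E]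
    [TopologicalSpace E] (μ : Measure Ω) (Y : ℕ → Ω → E) (ν : Measure E) : Prop :=
  ∀ f : BoundedContinuousFunction E ℝ,
    Tendsto (fun n => ∫ ω, f (Y n ω) ∂μ) atTop (nhds (∫ x, f x ∂ν))

/-- The multivariate Gaussian distribution with mean `0` and covariance matrix `C`
(defined as the law of `C^{1/2} Z` for a standard Gaussian vector `Z`; junk value if
`C` is not positive semidefinite). -/
def mvGauss {ι : Type*} [Fintype ι] [DecidableEq ι] (C : Matrix ι ι ℝ) : Measure (ι → ℝ) :=
  letI := Classical.propDecidable C.PosSemidef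
  if h : C.PosSemidef then
    (Measure.pi fun _ : ι => gaussianReal 0 1).map (fun x => (h.1.eigenvectorUnitary.1 * diagonal (fun i => √(h.1.eigenvalues i)) *
      (star h.1.eigenvectorUnitary : Matrix ι ι ℝ)) *ᵥ x)
  else 0

open scoped Classical in
/-- The pooled two-sample ADF variance estimator `σ̂²` of Maydeu-Olivares et al. -/
def pooledVar2 (k1 k2 n1 n2 : ℕ) (X : ℕ → Fin k1 → ℝ) (Y : ℕ → Fin k2 → ℝ) : ℝ :=
  ((n2 : ℝ) / ((n1 : ℝ) + (n2 : ℝ))) * (((n1 : ℝ) - 1)⁻¹ * ∑ i ∈ range n1,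
      (∑ p, deltaVec (sampleCov k1 n1 X) p *
        (vecm (outer fun a => X i a - sampleMean k1 n1 X a) p
          - vecm (sampleCov k1 n1 X) p)) ^ 2)
  + ((n1 : ℝ) / ((n1 : ℝ) + (n2 : ℝ))) * (((n2 : ℝ) - 1)⁻¹ * ∑ i ∈ range n2,
      (∑ p, deltaVec (sampleCov k2 n2 Y) p *
        (vecm (outer fun a => Y i a - sampleMean k2 n2 Y a) p
          - vecm (sampleCov k2 n2 Y) p)) ^ 2)

/-- The studentized two-sample statistic `T_n = M_n / σ̂`. -/
def Tstat2 (k1 k2 n1 n2 : ℕ) (X : ℕ → Fin k1 → ℝ) (Y : ℕ → Fin k2 → ℝ) : ℝ :=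
  Real.sqrt ((n1 : ℝ) * (n2 : ℝ) / ((n1 : ℝ) + (n2 : ℝ))) *
    (alphaC (sampleCov k1 n1 X) - alphaC (sampleCov k2 n2 Y))
  / Real.sqrt (pooledVar2 k1 k2 n1 n2 X Y)

/-- The studentized statistic computed from pooled data `Z` (first `n1` vectors form
group 1, the remaining `n2` form group 2). -/
def TstatF (k n1 n2 : ℕ) (Z : Fin (n1 + n2) → Fin k → ℝ) : ℝ :=
  Tstat2 k k n1 n2
    (fun i => if h : i < n1 + n2 then Z ⟨i, h⟩ else 0)
    (fun i => if h : n1 + i < n1 + n2 then Z ⟨n1 + i, h⟩ else 0)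

/-- The permutation distribution function `R_n(x) = (N!)^{-1} Σ_π 1{T_n^π ≤ x}`. -/
def permDistF (k n1 n2 : ℕ) (Z : Fin (n1 + n2) → Fin k → ℝ) (x : ℝ) : ℝ :=
  ((n1 + n2).factorial : ℝ)⁻¹ * ∑ π : Equiv.Perm (Fin (n1 + n2)),
    if TstatF k n1 n2 (fun i => Z (π i)) ≤ x then 1 else 0

open scoped Classical in
/-- The `(1-α)`-quantile `c_n^π(α)` of the permutation distribution. -/
def permCrit (k n1 n2 : ℕ) (a : ℝ) (Z : Fin (n1 + n2) → Fin k → ℝ) : ℝ :=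
  sInf {x : ℝ | 1 - a ≤ permDistF k n1 n2 Z x}

/-- Permutation probability of `{T_n^π > c}`. -/
def permGt (k n1 n2 : ℕ) (Z : Fin (n1 + n2) → Fin k → ℝ) (c : ℝ) : ℝ :=
  ((n1 + n2).factorial : ℝ)⁻¹ * ∑ π : Equiv.Perm (Fin (n1 + n2)),
    if c < TstatF k n1 n2 (fun i => Z (π i)) then 1 else 0

open scoped Classical in
/-- Permutation probability of `{T_n^π = c}`. -/
def permEq (k n1 n2 : ℕ) (Z : Fin (n1 + n2) → Fin k → ℝ) (c : ℝ) : ℝ :=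
  ((n1 + n2).factorial : ℝ)⁻¹ * ∑ π : Equiv.Perm (Fin (n1 + n2)),
    if TstatF k n1 n2 (fun i => Z (π i)) = c then 1 else 0

open scoped Classical in
/-- The randomization constant `γ_n^π(α)` of the classical randomized permutation test. -/
def permGamma (k n1 n2 : ℕ) (a : ℝ) (Z : Fin (n1 + n2) → Fin k → ℝ) : ℝ :=
  if permEq k n1 n2 Z (permCrit k n1 n2 a Z) = 0 then 0
  else (a - permGt k n1 n2 Z (permCrit k n1 n2 a Z))
        / permEq k n1 n2 Z (permCrit k n1 n2 a Z)

open scoped Classical in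
/-- The randomized permutation test `ψ_n = 1{T_n > c_n^π(α)} + γ_n^π(α)·1{T_n = c_n^π(α)}`. -/
def permTest (k n1 n2 : ℕ) (a : ℝ) (Z : Fin (n1 + n2) → Fin k → ℝ) : ℝ :=
  (if permCrit k n1 n2 a Z < TstatF k n1 n2 Z then 1 else 0)
  + permGamma k n1 n2 a Z * (if TstatF k n1 n2 Z = permCrit k n1 n2 a Z then 1 else 0)

/-- Pooling two samples: the first `n1` observations come from `X`, the rest from `Y`. -/
def pool (k n1 : ℕ) (X Y : ℕ → Fin k → ℝ) : ℕ → Fin k → ℝ :=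
  fun i => if i < n1 then X i else Y (i - n1)

/-- The conditional parametric-bootstrap distribution function `F_n⋆(x)` of the
studentized statistic, for observed group covariance matrices `S1`, `S2`. -/
def bootCDF (k1 k2 n1 n2 : ℕ) (S1 : Matrix (Fin k1) (Fin k1) ℝ)
    (S2 : Matrix (Fin k2) (Fin k2) ℝ) (x : ℝ) : ℝ :=
  (((Measure.pi fun _ : Fin n1 => mvGauss S1).prod
      (Measure.pi fun _ : Fin n2 => mvGauss S2))
    {p | Tstat2 k1 k2 n1 n2
        (fun i => if h : i < n1 then p.1 ⟨i, h⟩ else 0)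
        (fun i => if h : i < n2 then p.2 ⟨i, h⟩ else 0) ≤ x}).toReal

/-- The bootstrap critical value `c_n⋆(α)`. -/
def bootCrit (k1 k2 n1 n2 : ℕ) (a : ℝ) (S1 : Matrix (Fin k1) (Fin k1) ℝ)
    (S2 : Matrix (Fin k2) (Fin k2) ℝ) : ℝ :=
  sInf {x : ℝ | 1 - a ≤ bootCDF k1 k2 n1 n2 S1 S2 x}

end


noncomputable section PVCAux

namespace PVC

/-- average of the first `n` values of a sequence -/
def avg (n : ℕ) (f : ℕ → ℝ) : ℝ := (∑ i ∈ range n, f i) / n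

lemma sum_eq_avg {n : ℕ} (hn : (n : ℝ) ≠ 0) (f : ℕ → ℝ) :
    ∑ i ∈ range n, f i = n * avg n f := by
  rw [avg]; field_simp

lemma sum_centered2 {n : ℕ} (hn : (n : ℝ) ≠ 0) (u v : ℕ → ℝ) :
    ∑ i ∈ range n, (u i - avg n u) * (v i - avg n v)
      = n * (avg n (fun i => u i * v i) - avg n u * avg n v) := by
  have e : ∀ i ∈ range n, (u i - avg n u) * (v i - avg n v)
      = u i * v i - avg n u * v i - avg n v * u i + avg n u * avg n v := fun i _ => by ring
  rw [Finset.sum_congr rfl e]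
  simp only [Finset.sum_add_distrib, Finset.sum_sub_distrib, ← Finset.mul_sum,
    Finset.sum_const, card_range, nsmul_eq_mul]
  simp only [avg]
  field_simp
  ring

set_option maxHeartbeats 2000000 in
lemma sum_centered4 {n : ℕ} (hn : (n : ℝ) ≠ 0) (u v w z : ℕ → ℝ) :
    ∑ i ∈ range n, (u i - avg n u) * (v i - avg n v) * (w i - avg n w) * (z i - avg n z)
      = n * (avg n (fun i => u i * v i * w i * z i)
        - avg n u * avg n (fun i => v i * w i * z i)
        - avg n v * avg n (fun i => u i * w i * z i)
        - avg n w * avg n (fun i => u i * v i * z i)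
        - avg n z * avg n (fun i => u i * v i * w i)
        + avg n u * avg n v * avg n (fun i => w i * z i)
        + avg n u * avg n w * avg n (fun i => v i * z i)
        + avg n u * avg n z * avg n (fun i => v i * w i)
        + avg n v * avg n w * avg n (fun i => u i * z i)
        + avg n v * avg n z * avg n (fun i => u i * w i)
        + avg n w * avg n z * avg n (fun i => u i * v i)
        - 3 * (avg n u * avg n v * avg n w * avg n z)) := by
  have e : ∀ i ∈ range n,
      (u i - avg n u) * (v i - avg n v) * (w i - avg n w) * (z i - avg n z)
      = u i * v i * w i * z i
        - avg n u * (v i * w i * z i) - avg n v * (u i * w i * z i)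
        - avg n w * (u i * v i * z i) - avg n z * (u i * v i * w i)
        + avg n u * avg n v * (w i * z i) + avg n u * avg n w * (v i * z i)
        + avg n u * avg n z * (v i * w i) + avg n v * avg n w * (u i * z i)
        + avg n v * avg n z * (u i * w i) + avg n w * avg n z * (u i * v i)
        - avg n u * avg n v * avg n w * z i - avg n u * avg n v * avg n z * w i
        - avg n u * avg n w * avg n z * v i - avg n v * avg n w * avg n z * u i
        + avg n u * avg n v * avg n w * avg n z := fun i _ => by ring
  rw [Finset.sum_congr rfl e]
  simp only [Finset.sum_add_distrib, Finset.sum_sub_distrib, ← Finset.mul_sum,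
    Finset.sum_const, card_range, nsmul_eq_mul]
  simp only [avg]
  field_simp
  ring

/-- empirical moments -/
def A1 {k : ℕ} (n : ℕ) (x : ℕ → Fin k → ℝ) (a : Fin k) : ℝ := avg n (fun i => x i a)
def A2 {k : ℕ} (n : ℕ) (x : ℕ → Fin k → ℝ) (a b : Fin k) : ℝ := avg n (fun i => x i a * x i b)
def A3 {k : ℕ} (n : ℕ) (x : ℕ → Fin k → ℝ) (a b c : Fin k) : ℝ :=
  avg n (fun i => x i a * x i b * x i c)
def A4 {k : ℕ} (n : ℕ) (x : ℕ → Fin k → ℝ) (a b c d : Fin k) : ℝ :=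
  avg n (fun i => x i a * x i b * x i c * x i d)

def cA2 {k : ℕ} (m1 : Fin k → ℝ) (m2 : Fin k → Fin k → ℝ) (a b : Fin k) : ℝ :=
  m2 a b - m1 a * m1 b

def cA4 {k : ℕ} (m1 : Fin k → ℝ) (m2 : Fin k → Fin k → ℝ) (m3 : Fin k → Fin k → Fin k → ℝ)
    (m4 : Fin k → Fin k → Fin k → Fin k → ℝ) (a b c d : Fin k) : ℝ :=
  m4 a b c d
    - m1 a * m3 b c d - m1 b * m3 a c d - m1 c * m3 a b d - m1 d * m3 a b c
    + m1 a * m1 b * m2 c d + m1 a * m1 c * m2 b d + m1 a * m1 d * m2 b c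
    + m1 b * m1 c * m2 a d + m1 b * m1 d * m2 a c + m1 c * m1 d * m2 a b
    - 3 * (m1 a * m1 b * m1 c * m1 d)

def covE (k : ℕ) (ε : ℝ) (m1 : Fin k → ℝ) (m2 : Fin k → Fin k → ℝ) :
    Matrix (Fin k) (Fin k) ℝ :=
  Matrix.of fun a b => (1 - ε)⁻¹ * cA2 m1 m2 a b

/-- the one-sample ADF variance estimator as a function of `1/n` and the empirical moments -/
def Phi (k : ℕ) (ε : ℝ) (m1 : Fin k → ℝ) (m2 : Fin k → Fin k → ℝ)
    (m3 : Fin k → Fin k → Fin k → ℝ) (m4 : Fin k → Fin k → Fin k → Fin k → ℝ) : ℝ :=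
  (1 - ε)⁻¹ * ∑ p : SymIdx k, ∑ q : SymIdx k,
    deltaVec (covE k ε m1 m2) p * deltaVec (covE k ε m1 m2) q *
      (cA4 m1 m2 m3 m4 p.1.1 p.1.2 q.1.1 q.1.2
        - covE k ε m1 m2 p.1.1 p.1.2 * cA2 m1 m2 q.1.1 q.1.2
        - covE k ε m1 m2 q.1.1 q.1.2 * cA2 m1 m2 p.1.1 p.1.2
        + covE k ε m1 m2 p.1.1 p.1.2 * covE k ε m1 m2 q.1.1 q.1.2)

lemma sampleMean_eq {k : ℕ} (n : ℕ) (x : ℕ → Fin k → ℝ) (a : Fin k) :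
    sampleMean k n x a = A1 n x a := by
  simp [sampleMean, A1, avg, Finset.sum_apply, div_eq_inv_mul]

lemma sampleCov_eq {k : ℕ} {n : ℕ} (hn : 2 ≤ n) (x : ℕ → Fin k → ℝ) :
    sampleCov k n x = covE k (1 / (n : ℝ)) (A1 n x) (A2 n x) := by
  have hn0 : (n : ℝ) ≠ 0 := by
    have : (2 : ℝ) ≤ (n : ℝ) := by exact_mod_cast hn
    linarith
  have hn1 : (n : ℝ) - 1 ≠ 0 := by
    have : (2 : ℝ) ≤ (n : ℝ) := by exact_mod_cast hn
    linarith
  ext a b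
  have h1 : sampleCov k n x a b
      = ((n : ℝ) - 1)⁻¹ * ∑ i ∈ range n,
        (x i a - avg n (fun i => x i a)) * (x i b - avg n (fun i => x i b)) := by
    simp only [sampleCov, Matrix.smul_apply, Matrix.sum_apply, smul_eq_mul, outer,
      Matrix.of_apply]
    congr 1
    refine Finset.sum_congr rfl fun i _ => ?_
    rw [sampleMean_eq, sampleMean_eq]
    rfl
  rw [h1, sum_centered2 hn0]
  simp only [covE, Matrix.of_apply, cA2, A1, A2]
  field_simp

lemma onesample_eq {k : ℕ} {n : ℕ} (hn : 2 ≤ n) (x : ℕ → Fin k → ℝ) :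
    ((n : ℝ) - 1)⁻¹ * ∑ i ∈ range n,
        (∑ p, deltaVec (sampleCov k n x) p *
          (vecm (outer fun a => x i a - sampleMean k n x a) p
            - vecm (sampleCov k n x) p)) ^ 2
      = Phi k (1 / (n : ℝ)) (A1 n x) (A2 n x) (A3 n x) (A4 n x) := by
  have hnR : (2 : ℝ) ≤ (n : ℝ) := by exact_mod_cast hn
  have hn0 : (n : ℝ) ≠ 0 := by linarith
  have hn1 : (n : ℝ) - 1 ≠ 0 := by linarith
  rw [sampleCov_eq hn]
  set S : Matrix (Fin k) (Fin k) ℝ := covE k (1 / (n : ℝ)) (A1 n x) (A2 n x) with hSdef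
  set D : SymIdx k → ℝ := deltaVec S with hDdef
  have key2 : ∀ p q : SymIdx k,
      ∑ i ∈ range n, ((vecm (outer fun a => x i a - sampleMean k n x a) p - vecm S p) *
          (vecm (outer fun a => x i a - sampleMean k n x a) q - vecm S q))
      = (n : ℝ) * (cA4 (A1 n x) (A2 n x) (A3 n x) (A4 n x) p.1.1 p.1.2 q.1.1 q.1.2
          - S p.1.1 p.1.2 * cA2 (A1 n x) (A2 n x) q.1.1 q.1.2
          - S q.1.1 q.1.2 * cA2 (A1 n x) (A2 n x) p.1.1 p.1.2
          + S p.1.1 p.1.2 * S q.1.1 q.1.2) := by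
    intro p q
    have hm : ∀ a, sampleMean k n x a = avg n fun j => x j a := fun a => sampleMean_eq n x a
    have e2 : ∀ i ∈ range n,
        ((vecm (outer fun a => x i a - sampleMean k n x a) p - vecm S p) *
            (vecm (outer fun a => x i a - sampleMean k n x a) q - vecm S q))
        = (x i p.1.1 - avg n fun j => x j p.1.1) * (x i p.1.2 - avg n fun j => x j p.1.2)
              * (x i q.1.1 - avg n fun j => x j q.1.1) * (x i q.1.2 - avg n fun j => x j q.1.2)
          - S p.1.1 p.1.2 * ((x i q.1.1 - avg n fun j => x j q.1.1) *
              (x i q.1.2 - avg n fun j => x j q.1.2))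
          - S q.1.1 q.1.2 * ((x i p.1.1 - avg n fun j => x j p.1.1) *
              (x i p.1.2 - avg n fun j => x j p.1.2))
          + S p.1.1 p.1.2 * S q.1.1 q.1.2 := by
      intro i _
      simp only [vecm, outer, Matrix.of_apply, hm]
      ring
    rw [Finset.sum_congr rfl e2]
    simp only [Finset.sum_add_distrib, Finset.sum_sub_distrib, ← Finset.mul_sum,
      Finset.sum_const, card_range, nsmul_eq_mul]
    rw [sum_centered4 hn0, sum_centered2 hn0, sum_centered2 hn0]
    simp only [cA4, cA2, A1, A2, A3, A4]
    ring
  have e1 : ∀ i ∈ range n,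
      (∑ p : SymIdx k, D p * (vecm (outer fun a => x i a - sampleMean k n x a) p - vecm S p)) ^ 2
      = ∑ p : SymIdx k, ∑ q : SymIdx k, D p * D q *
          ((vecm (outer fun a => x i a - sampleMean k n x a) p - vecm S p) *
           (vecm (outer fun a => x i a - sampleMean k n x a) q - vecm S q)) := by
    intro i _
    rw [sq, Finset.sum_mul_sum]
    exact Finset.sum_congr rfl fun p _ => Finset.sum_congr rfl fun q _ => by ring
  calc ((n : ℝ) - 1)⁻¹ * ∑ i ∈ range n,
        (∑ p : SymIdx k, D p * (vecm (outer fun a => x i a - sampleMean k n x a) p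
          - vecm S p)) ^ 2
      = ((n : ℝ) - 1)⁻¹ * ∑ i ∈ range n, ∑ p : SymIdx k, ∑ q : SymIdx k, D p * D q *
          ((vecm (outer fun a => x i a - sampleMean k n x a) p - vecm S p) *
           (vecm (outer fun a => x i a - sampleMean k n x a) q - vecm S q)) := by
        rw [Finset.sum_congr rfl e1]
    _ = ((n : ℝ) - 1)⁻¹ * ∑ p : SymIdx k, ∑ q : SymIdx k, ∑ i ∈ range n, D p * D q *
          ((vecm (outer fun a => x i a - sampleMean k n x a) p - vecm S p) *
           (vecm (outer fun a => x i a - sampleMean k n x a) q - vecm S q)) := by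
        congr 1
        rw [Finset.sum_comm]
        exact Finset.sum_congr rfl fun p _ => Finset.sum_comm
    _ = ((n : ℝ) - 1)⁻¹ * ∑ p : SymIdx k, ∑ q : SymIdx k, (n : ℝ) * (D p * D q *
          (cA4 (A1 n x) (A2 n x) (A3 n x) (A4 n x) p.1.1 p.1.2 q.1.1 q.1.2
            - S p.1.1 p.1.2 * cA2 (A1 n x) (A2 n x) q.1.1 q.1.2
            - S q.1.1 q.1.2 * cA2 (A1 n x) (A2 n x) p.1.1 p.1.2
            + S p.1.1 p.1.2 * S q.1.1 q.1.2)) := by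
        congr 1
        refine Finset.sum_congr rfl fun p _ => Finset.sum_congr rfl fun q _ => ?_
        rw [← Finset.mul_sum, key2 p q]
        ring
    _ = (1 - 1 / (n : ℝ))⁻¹ * ∑ p : SymIdx k, ∑ q : SymIdx k, D p * D q *
          (cA4 (A1 n x) (A2 n x) (A3 n x) (A4 n x) p.1.1 p.1.2 q.1.1 q.1.2
            - S p.1.1 p.1.2 * cA2 (A1 n x) (A2 n x) q.1.1 q.1.2
            - S q.1.1 q.1.2 * cA2 (A1 n x) (A2 n x) p.1.1 p.1.2
            + S p.1.1 p.1.2 * S q.1.1 q.1.2) := by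
        simp only [← Finset.mul_sum]
        rw [← mul_assoc]
        congr 1
        have h1 : (1 - 1 / (n : ℝ)) = ((n : ℝ) - 1) / (n : ℝ) := by field_simp
        rw [h1, inv_div]
        field_simp
    _ = Phi k (1 / (n : ℝ)) (A1 n x) (A2 n x) (A3 n x) (A4 n x) := by
        simp only [Phi, ← hSdef, ← hDdef]

lemma contAt_delta (k : ℕ) (p : SymIdx k) {v0 : SymIdx k → ℝ}
    (h : oneSum (unvec v0) ≠ 0) :
    ContinuousAt (fun v : SymIdx k → ℝ => fderiv ℝ (alphaVec k) v (Pi.single p 1)) v0 := by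
  classical
  set U : Set (SymIdx k → ℝ) := {v | oneSum (unvec v) ≠ 0} with hUdef
  have hL2CD : ContDiff ℝ (⊤ : ℕ∞) fun v : SymIdx k → ℝ => oneSum (unvec v) := by
    unfold oneSum unvec
    refine ContDiff.sum fun i _ => ContDiff.sum fun j _ => ?_
    dsimp only [Matrix.of_apply]
    split_ifs with hij
    · exact contDiff_apply ℝ ℝ _
    · exact contDiff_apply ℝ ℝ _
  have hL2 : Continuous fun v : SymIdx k → ℝ => oneSum (unvec v) := hL2CD.continuous
  have hUopen : IsOpen U := isOpen_compl_singleton.preimage hL2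
  have htrCD : ContDiff ℝ (⊤ : ℕ∞) fun v : SymIdx k → ℝ => (unvec v).trace := by
    have he : (fun v : SymIdx k → ℝ => (unvec v).trace)
        = fun v : SymIdx k → ℝ => ∑ i, v ⟨(i, i), le_rfl⟩ := by
      funext v; simp [Matrix.trace, Matrix.diag, unvec]
    rw [he]
    exact ContDiff.sum fun i _ => contDiff_apply ℝ ℝ _
  have hAlpha : ContDiffOn ℝ (⊤ : ℕ∞) (alphaVec k) U := by
    have he : alphaVec k = fun v : SymIdx k → ℝ =>
        ((k : ℝ) / ((k : ℝ) - 1)) * (1 - (unvec v).trace / oneSum (unvec v)) := rfl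
    rw [he]
    exact contDiffOn_const.mul (contDiffOn_const.sub
      (htrCD.contDiffOn.div hL2CD.contDiffOn fun v hv => hv))
  have hfd : ContinuousOn (fun v => fderiv ℝ (alphaVec k) v) U :=
    hAlpha.continuousOn_fderiv_of_isOpen hUopen (by exact_mod_cast le_top)
  have h1 : ContinuousAt (fun v => fderiv ℝ (alphaVec k) v) v0 :=
    hfd.continuousAt (hUopen.mem_nhds h)
  exact ((ContinuousLinearMap.apply ℝ ℝ (Pi.single p 1)).continuous.continuousAt).comp h1

lemma tendsto_Phi {ι : Type*} {l : Filter ι} (k : ℕ) (S : Matrix (Fin k) (Fin k) ℝ)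
    (hS : oneSum (unvec (vecm S)) ≠ 0)
    (m3L : Fin k → Fin k → Fin k → ℝ) (m4L : Fin k → Fin k → Fin k → Fin k → ℝ)
    (ε : ι → ℝ) (m1 : ι → Fin k → ℝ) (m2 : ι → Fin k → Fin k → ℝ)
    (m3 : ι → Fin k → Fin k → Fin k → ℝ) (m4 : ι → Fin k → Fin k → Fin k → Fin k → ℝ)
    (hε : Tendsto ε l (nhds 0)) (h1 : ∀ a, Tendsto (fun t => m1 t a) l (nhds 0))
    (h2 : ∀ a b, Tendsto (fun t => m2 t a b) l (nhds (S a b)))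
    (h3 : ∀ a b c, Tendsto (fun t => m3 t a b c) l (nhds (m3L a b c)))
    (h4 : ∀ a b c d, Tendsto (fun t => m4 t a b c d) l (nhds (m4L a b c d))) :
    Tendsto (fun t => Phi k (ε t) (m1 t) (m2 t) (m3 t) (m4 t)) l
      (nhds (∑ p : SymIdx k, ∑ q : SymIdx k, deltaVec S p * deltaVec S q *
        (m4L p.1.1 p.1.2 q.1.1 q.1.2 - S p.1.1 p.1.2 * S q.1.1 q.1.2))) := by
  have hinv : Tendsto (fun t => (1 - ε t)⁻¹) l (nhds 1) := by
    have h0 : Tendsto (fun t => 1 - ε t) l (nhds 1) := by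
      simpa using tendsto_const_nhds.sub hε
    simpa using h0.inv₀ (by norm_num)
  have hcA2 : ∀ a b, Tendsto (fun t => cA2 (m1 t) (m2 t) a b) l (nhds (S a b)) := by
    intro a b
    have h := (h2 a b).sub ((h1 a).mul (h1 b))
    simpa [cA2] using h
  have hcov : ∀ a b, Tendsto (fun t => covE k (ε t) (m1 t) (m2 t) a b) l (nhds (S a b)) := by
    intro a b
    have h := hinv.mul (hcA2 a b)
    simpa [covE] using h
  have hvec : Tendsto (fun t => vecm (covE k (ε t) (m1 t) (m2 t))) l (nhds (vecm S)) :=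
    tendsto_pi_nhds.2 fun p => hcov p.1.1 p.1.2
  have hdelta : ∀ p : SymIdx k, Tendsto (fun t => deltaVec (covE k (ε t) (m1 t) (m2 t)) p) l
      (nhds (deltaVec S p)) := fun p => ((contAt_delta k p hS).tendsto).comp hvec
  have hcA4 : ∀ a b c d, Tendsto (fun t => cA4 (m1 t) (m2 t) (m3 t) (m4 t) a b c d) l
      (nhds (m4L a b c d)) := by
    intro a b c d
    have h := (((((((((((h4 a b c d).sub ((h1 a).mul (h3 b c d))).sub
      ((h1 b).mul (h3 a c d))).sub ((h1 c).mul (h3 a b d))).sub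
      ((h1 d).mul (h3 a b c))).add (((h1 a).mul (h1 b)).mul (h2 c d))).add
      (((h1 a).mul (h1 c)).mul (h2 b d))).add (((h1 a).mul (h1 d)).mul (h2 b c))).add
      (((h1 b).mul (h1 c)).mul (h2 a d))).add (((h1 b).mul (h1 d)).mul (h2 a c))).add
      (((h1 c).mul (h1 d)).mul (h2 a b))).sub
      ((tendsto_const_nhds (x := (3:ℝ))).mul ((((h1 a).mul (h1 b)).mul (h1 c)).mul (h1 d)))
    simpa [cA4] using h
  have hterm : ∀ p q : SymIdx k, Tendsto (fun t =>
      deltaVec (covE k (ε t) (m1 t) (m2 t)) p * deltaVec (covE k (ε t) (m1 t) (m2 t)) q *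
        (cA4 (m1 t) (m2 t) (m3 t) (m4 t) p.1.1 p.1.2 q.1.1 q.1.2
          - covE k (ε t) (m1 t) (m2 t) p.1.1 p.1.2 * cA2 (m1 t) (m2 t) q.1.1 q.1.2
          - covE k (ε t) (m1 t) (m2 t) q.1.1 q.1.2 * cA2 (m1 t) (m2 t) p.1.1 p.1.2
          + covE k (ε t) (m1 t) (m2 t) p.1.1 p.1.2 * covE k (ε t) (m1 t) (m2 t) q.1.1 q.1.2)) l
      (nhds (deltaVec S p * deltaVec S q *
        (m4L p.1.1 p.1.2 q.1.1 q.1.2 - S p.1.1 p.1.2 * S q.1.1 q.1.2))) := by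
    intro p q
    have h := ((hdelta p).mul (hdelta q)).mul
      ((((hcA4 p.1.1 p.1.2 q.1.1 q.1.2).sub
        ((hcov p.1.1 p.1.2).mul (hcA2 q.1.1 q.1.2))).sub
        ((hcov q.1.1 q.1.2).mul (hcA2 p.1.1 p.1.2))).add
        ((hcov p.1.1 p.1.2).mul (hcov q.1.1 q.1.2)))
    convert h using 2
    ring
  have hsum : Tendsto (fun t => ∑ p : SymIdx k, ∑ q : SymIdx k,
      deltaVec (covE k (ε t) (m1 t) (m2 t)) p * deltaVec (covE k (ε t) (m1 t) (m2 t)) q *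
        (cA4 (m1 t) (m2 t) (m3 t) (m4 t) p.1.1 p.1.2 q.1.1 q.1.2
          - covE k (ε t) (m1 t) (m2 t) p.1.1 p.1.2 * cA2 (m1 t) (m2 t) q.1.1 q.1.2
          - covE k (ε t) (m1 t) (m2 t) q.1.1 q.1.2 * cA2 (m1 t) (m2 t) p.1.1 p.1.2
          + covE k (ε t) (m1 t) (m2 t) p.1.1 p.1.2 * covE k (ε t) (m1 t) (m2 t) q.1.1 q.1.2)) l
      (nhds (∑ p : SymIdx k, ∑ q : SymIdx k, deltaVec S p * deltaVec S q *
        (m4L p.1.1 p.1.2 q.1.1 q.1.2 - S p.1.1 p.1.2 * S q.1.1 q.1.2))) :=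
    tendsto_finset_sum _ fun p _ => tendsto_finset_sum _ fun q _ => hterm p q
  have h := hinv.mul hsum
  simpa [Phi] using h

lemma pow_le_one_add_pow8 {t : ℝ} (ht : 0 ≤ t) {m : ℕ} (hm : m ≤ 8) :
    t ^ m ≤ 1 + t ^ 8 := by
  rcases le_or_gt t 1 with h | h
  · have : t ^ m ≤ 1 := pow_le_one₀ ht h
    nlinarith [pow_nonneg ht 8]
  · have h1 : (1:ℝ) ≤ t := le_of_lt h
    have : t ^ m ≤ t ^ 8 := pow_le_pow_right₀ h1 hm
    nlinarith

lemma abs_prod4_le {k : ℕ} (x : Fin k → ℝ) (a b c d : Fin k) :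
    |x a * x b * x c * x d| ≤ 1 + ‖x‖ ^ 8 := by
  have h : ∀ a, |x a| ≤ ‖x‖ := fun a => by
    simpa [Real.norm_eq_abs] using norm_le_pi_norm x a
  have hn : (0:ℝ) ≤ ‖x‖ := norm_nonneg x
  have h4 : |x a * x b * x c * x d| ≤ ‖x‖ ^ 4 := by
    rw [abs_mul, abs_mul, abs_mul]
    have := mul_le_mul (mul_le_mul (mul_le_mul (h a) (h b) (abs_nonneg _) hn)
      (h c) (abs_nonneg _) (by positivity)) (h d) (abs_nonneg _) (by positivity)
    calc |x a| * |x b| * |x c| * |x d| ≤ ‖x‖ * ‖x‖ * ‖x‖ * ‖x‖ := this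
    _ = ‖x‖ ^ 4 := by ring
  exact h4.trans (pow_le_one_add_pow8 hn (by norm_num))

lemma abs_prod3_le {k : ℕ} (x : Fin k → ℝ) (a b c : Fin k) :
    |x a * x b * x c| ≤ 1 + ‖x‖ ^ 8 := by
  have h : ∀ a, |x a| ≤ ‖x‖ := fun a => by
    simpa [Real.norm_eq_abs] using norm_le_pi_norm x a
  have hn : (0:ℝ) ≤ ‖x‖ := norm_nonneg x
  have h3 : |x a * x b * x c| ≤ ‖x‖ ^ 3 := by
    rw [abs_mul, abs_mul]
    have := mul_le_mul (mul_le_mul (h a) (h b) (abs_nonneg _) hn)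
      (h c) (abs_nonneg _) (by positivity)
    calc |x a| * |x b| * |x c| ≤ ‖x‖ * ‖x‖ * ‖x‖ := this
    _ = ‖x‖ ^ 3 := by ring
  exact h3.trans (pow_le_one_add_pow8 hn (by norm_num))

lemma abs_prod2_le {k : ℕ} (x : Fin k → ℝ) (a b : Fin k) :
    |x a * x b| ≤ 1 + ‖x‖ ^ 8 := by
  have h : ∀ a, |x a| ≤ ‖x‖ := fun a => by
    simpa [Real.norm_eq_abs] using norm_le_pi_norm x a
  have hn : (0:ℝ) ≤ ‖x‖ := norm_nonneg x
  have h2 : |x a * x b| ≤ ‖x‖ ^ 2 := by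
    rw [abs_mul]
    have := mul_le_mul (h a) (h b) (abs_nonneg _) hn
    calc |x a| * |x b| ≤ ‖x‖ * ‖x‖ := this
    _ = ‖x‖ ^ 2 := by ring
  exact h2.trans (pow_le_one_add_pow8 hn (by norm_num))

lemma abs_prod1_le {k : ℕ} (x : Fin k → ℝ) (a : Fin k) :
    |x a| ≤ 1 + ‖x‖ ^ 8 := by
  have h : |x a| ≤ ‖x‖ := by
    simpa [Real.norm_eq_abs] using norm_le_pi_norm x a
  have hn : (0:ℝ) ≤ ‖x‖ := norm_nonneg x
  have h8 := pow_le_one_add_pow8 hn (show 1 ≤ 8 by norm_num)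
  rw [pow_one] at h8
  exact h.trans h8

lemma integrable_of_bound {Ω : Type*} [MeasurableSpace Ω] (μ : Measure Ω)
    [IsProbabilityMeasure μ] {k : ℕ} (Z : Ω → Fin k → ℝ) (hmeas : Measurable Z)
    (hmom : Integrable (fun ω => ‖Z ω‖ ^ 8) μ) (f : (Fin k → ℝ) → ℝ) (hf : Measurable f)
    (hbd : ∀ x, |f x| ≤ 1 + ‖x‖ ^ 8) : Integrable (fun ω => f (Z ω)) μ := by
  have hg : Integrable (fun ω => 1 + ‖Z ω‖ ^ 8) μ := (integrable_const 1).add hmom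
  refine hg.mono' ((hf.comp hmeas).aestronglyMeasurable) (ae_of_all _ fun ω => ?_)
  simpa [Real.norm_eq_abs] using hbd (Z ω)

lemma slln {Ω : Type*} [MeasurableSpace Ω] (μ : Measure Ω) [IsProbabilityMeasure μ]
    {k : ℕ} (X : ℕ → Ω → Fin k → ℝ) (hmeas : ∀ i, Measurable (X i))
    (hindep : iIndepFun X μ)
    (hid : ∀ i, IdentDistrib (X i) (X 0) μ μ)
    (hmom : Integrable (fun ω => ‖X 0 ω‖ ^ 8) μ)
    (f : (Fin k → ℝ) → ℝ) (hf : Measurable f) (hbd : ∀ x, |f x| ≤ 1 + ‖x‖ ^ 8) :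
    ∀ᵐ ω ∂μ, Tendsto (fun n => avg n (fun i => f (X i ω))) atTop
      (nhds (∫ ω, f (X 0 ω) ∂μ)) := by
  have hint : Integrable (fun ω => f (X 0 ω)) μ :=
    integrable_of_bound μ (X 0) (hmeas 0) hmom f hf hbd
  have hindep' : Pairwise (Function.onFun (fun g h => IndepFun g h μ) fun i => fun ω => f (X i ω)) := by
    intro i j hij
    exact (hindep.indepFun hij).comp hf hf
  have hid' : ∀ i, IdentDistrib (fun ω => f (X i ω)) (fun ω => f (X 0 ω)) μ μ :=
    fun i => (hid i).comp hf
  have h := strong_law_ae_real (fun i ω => f (X i ω)) hint hindep' hid'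
  filter_upwards [h] with ω hω
  exact hω

lemma moments_cov {Ω : Type*} [MeasurableSpace Ω] (μ : Measure Ω) [IsProbabilityMeasure μ]
    {k : ℕ} (Z : Ω → Fin k → ℝ) (hmeas : Measurable Z)
    (hmom : Integrable (fun ω => ‖Z ω‖ ^ 8) μ)
    (S : Matrix (Fin k) (Fin k) ℝ) (hS : ∀ a b, S a b = ∫ ω, Z ω a * Z ω b ∂μ)
    (C : Matrix (SymIdx k) (SymIdx k) ℝ)
    (hC : ∀ p q, C p q = ∫ ω,
      (vecm (outer (Z ω)) p - ∫ ω', vecm (outer (Z ω')) p ∂μ) *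
      (vecm (outer (Z ω)) q - ∫ ω', vecm (outer (Z ω')) q ∂μ) ∂μ)
    (p q : SymIdx k) :
    C p q = (∫ ω, Z ω p.1.1 * Z ω p.1.2 * Z ω q.1.1 * Z ω q.1.2 ∂μ)
      - vecm S p * vecm S q := by
  have hXc : ∀ a : Fin k, Measurable fun ω => Z ω a :=
    fun a => (measurable_pi_apply a).comp hmeas
  have hf2 : ∀ a b : Fin k, Integrable (fun ω => Z ω a * Z ω b) μ := fun a b =>
    integrable_of_bound μ Z hmeas hmom (fun x => x a * x b)
      ((measurable_pi_apply a).mul (measurable_pi_apply b)) (fun x => abs_prod2_le x a b)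
  have hf4 : Integrable (fun ω => Z ω p.1.1 * Z ω p.1.2 * (Z ω q.1.1 * Z ω q.1.2)) μ := by
    have h := integrable_of_bound μ Z hmeas hmom
      (fun x => x p.1.1 * x p.1.2 * x q.1.1 * x q.1.2)
      ((((measurable_pi_apply p.1.1).mul (measurable_pi_apply p.1.2)).mul
        (measurable_pi_apply q.1.1)).mul (measurable_pi_apply q.1.2))
      (fun x => abs_prod4_le x p.1.1 p.1.2 q.1.1 q.1.2)
    exact h.congr (Eventually.of_forall fun ω => by ring)
  set a : ℝ := ∫ ω, Z ω p.1.1 * Z ω p.1.2 ∂μ with ha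
  set b : ℝ := ∫ ω, Z ω q.1.1 * Z ω q.1.2 ∂μ with hb
  have h1 : C p q = ∫ ω, (Z ω p.1.1 * Z ω p.1.2 - a) * (Z ω q.1.1 * Z ω q.1.2 - b) ∂μ := by
    rw [hC p q]
    rfl
  have h2 : ∀ ω, (Z ω p.1.1 * Z ω p.1.2 - a) * (Z ω q.1.1 * Z ω q.1.2 - b)
      = (Z ω p.1.1 * Z ω p.1.2) * (Z ω q.1.1 * Z ω q.1.2)
        - a * (Z ω q.1.1 * Z ω q.1.2) - b * (Z ω p.1.1 * Z ω p.1.2) + a * b :=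
    fun ω => by ring
  have hIa : Integrable (fun ω => a * (Z ω q.1.1 * Z ω q.1.2)) μ :=
    (hf2 q.1.1 q.1.2).const_mul a
  have hIb : Integrable (fun ω => b * (Z ω p.1.1 * Z ω p.1.2)) μ :=
    (hf2 p.1.1 p.1.2).const_mul b
  have hI1 : Integrable (fun ω => Z ω p.1.1 * Z ω p.1.2 * (Z ω q.1.1 * Z ω q.1.2)
      - a * (Z ω q.1.1 * Z ω q.1.2)) μ := hf4.sub hIa
  have hI2 : Integrable (fun ω => Z ω p.1.1 * Z ω p.1.2 * (Z ω q.1.1 * Z ω q.1.2)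
      - a * (Z ω q.1.1 * Z ω q.1.2) - b * (Z ω p.1.1 * Z ω p.1.2)) μ := hI1.sub hIb
  rw [h1, integral_congr_ae (Eventually.of_forall h2),
    integral_add hI2 (integrable_const (a * b)), integral_sub hI1 hIb,
    integral_sub hf4 hIa, integral_const_mul, integral_const_mul, integral_const]
  have h3 : (∫ ω, Z ω p.1.1 * Z ω p.1.2 * (Z ω q.1.1 * Z ω q.1.2) ∂μ)
      = ∫ ω, Z ω p.1.1 * Z ω p.1.2 * Z ω q.1.1 * Z ω q.1.2 ∂μ :=
    integral_congr_ae (Eventually.of_forall fun ω => by ring)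
  have h4 : vecm S p = a := by rw [ha]; exact hS p.1.1 p.1.2
  have h5 : vecm S q = b := by rw [hb]; exact hS q.1.1 q.1.2
  rw [h3, h4, h5]
  have hμ : μ.real Set.univ = 1 := by simp
  rw [smul_eq_mul, hμ]
  ring

lemma meas_est {Ω : Type*} [MeasurableSpace Ω] (k n : ℕ) (X : ℕ → Ω → Fin k → ℝ)
    (hmeas : ∀ i, Measurable (X i)) :
    Measurable (fun ω => ((n : ℝ) - 1)⁻¹ * ∑ i ∈ range n,
      (∑ p, deltaVec (sampleCov k n fun j => X j ω) p *
        (vecm (outer fun a => X i ω a - sampleMean k n (fun j => X j ω) a) p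
          - vecm (sampleCov k n fun j => X j ω) p)) ^ 2) := by
  have hXc : ∀ i a, Measurable fun ω => X i ω a :=
    fun i a => (measurable_pi_apply a).comp (hmeas i)
  have hmean : ∀ a, Measurable fun ω => sampleMean k n (fun j => X j ω) a := by
    intro a
    have he : (fun ω => sampleMean k n (fun j => X j ω) a)
        = fun ω => (n : ℝ)⁻¹ * ∑ i ∈ range n, X i ω a := by
      funext ω; simp [sampleMean, Finset.sum_apply]
    rw [he]
    exact (Finset.measurable_sum _ fun i _ => hXc i a).const_mul _
  have hcov : ∀ a b, Measurable fun ω => sampleCov k n (fun j => X j ω) a b := by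
    intro a b
    have he : (fun ω => sampleCov k n (fun j => X j ω) a b)
        = fun ω => ((n : ℝ) - 1)⁻¹ * ∑ i ∈ range n,
          ((X i ω a - sampleMean k n (fun j => X j ω) a) *
           (X i ω b - sampleMean k n (fun j => X j ω) b)) := by
      funext ω; simp [sampleCov, Matrix.smul_apply, Matrix.sum_apply, outer]
    rw [he]
    exact (Finset.measurable_sum _ fun i _ =>
      ((hXc i a).sub (hmean a)).mul ((hXc i b).sub (hmean b))).const_mul _
  have hvec : Measurable fun ω => vecm (sampleCov k n fun j => X j ω) :=
    measurable_pi_lambda _ fun p => hcov p.1.1 p.1.2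
  have hdelta : ∀ p : SymIdx k,
      Measurable fun ω => deltaVec (sampleCov k n fun j => X j ω) p := by
    intro p
    exact (measurable_fderiv_apply_const ℝ (alphaVec k) (Pi.single p 1)).comp hvec
  refine Measurable.const_mul ?_ _
  refine Finset.measurable_sum _ fun i _ => ?_
  refine Measurable.pow_const ?_ 2
  refine Finset.measurable_sum _ fun p _ => ?_
  refine (hdelta p).mul ?_
  exact (((hXc i p.1.1).sub (hmean p.1.1)).mul
    ((hXc i p.1.2).sub (hmean p.1.2))).sub (hcov p.1.1 p.1.2)

lemma oneSum_unvec_vecm {k : ℕ} (S : Matrix (Fin k) (Fin k) ℝ)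
    (hsym : ∀ a b, S a b = S b a) : oneSum (unvec (vecm S)) = oneSum S := by
  unfold oneSum
  refine Finset.sum_congr rfl fun i _ => Finset.sum_congr rfl fun j _ => ?_
  simp only [unvec, vecm, Matrix.of_apply]
  split_ifs with h
  · rfl
  · exact hsym j i

end PVC

end PVCAux

open PVC
/-- consistency of the pooled ADF variance estimator. -/
theorem pooledVariance_consistent
    {Ω : Type*} [MeasurableSpace Ω] (μ : MeasureTheory.Measure Ω) [IsProbabilityMeasure μ]
    (k : ℕ) (hk : 2 ≤ k)
    (X Y : ℕ → Ω → (Fin k → ℝ))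
    (hmeasX : ∀ i, Measurable (X i)) (hmeasY : ∀ i, Measurable (Y i))
    (hindepX : iIndepFun X μ)
    (hindepY : iIndepFun Y μ)
    (hindepXY : IndepFun (fun ω i => X i ω) (fun ω i => Y i ω) μ)
    (hidX : ∀ i, IdentDistrib (X i) (X 0) μ μ)
    (hidY : ∀ i, IdentDistrib (Y i) (Y 0) μ μ)
    (hmeanX : ∀ a, ∫ ω, X 0 ω a ∂μ = 0) (hmeanY : ∀ a, ∫ ω, Y 0 ω a ∂μ = 0)
    (hmomX : Integrable (fun ω => ‖X 0 ω‖ ^ 8) μ)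
    (hmomY : Integrable (fun ω => ‖Y 0 ω‖ ^ 8) μ)
    (S1 S2 : Matrix (Fin k) (Fin k) ℝ)
    (hS1 : ∀ a b, S1 a b = ∫ ω, X 0 ω a * X 0 ω b ∂μ)
    (hS2 : ∀ a b, S2 a b = ∫ ω, Y 0 ω a * Y 0 ω b ∂μ)
    (hpos1 : 0 < oneSum S1) (hpos2 : 0 < oneSum S2)
    (C1 C2m : Matrix (SymIdx k) (SymIdx k) ℝ)
    (hC1 : ∀ p q, C1 p q = ∫ ω,
      (vecm (outer (X 0 ω)) p - ∫ ω', vecm (outer (X 0 ω')) p ∂μ) *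
      (vecm (outer (X 0 ω)) q - ∫ ω', vecm (outer (X 0 ω')) q ∂μ) ∂μ)
    (hC2 : ∀ p q, C2m p q = ∫ ω,
      (vecm (outer (Y 0 ω)) p - ∫ ω', vecm (outer (Y 0 ω')) p ∂μ) *
      (vecm (outer (Y 0 ω)) q - ∫ ω', vecm (outer (Y 0 ω')) q ∂μ) ∂μ)
    (n1 n2 : ℕ → ℕ) (hn1 : Tendsto n1 atTop atTop) (hn2 : Tendsto n2 atTop atTop)
    (κ : ℝ) (hκ : κ ∈ Set.Ioo (0:ℝ) 1)
    (hratio : Tendsto (fun t => (n1 t : ℝ) / ((n1 t : ℝ) + (n2 t : ℝ))) atTop (nhds κ)) :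
    TendstoInMeasure μ
      (fun t ω => pooledVar2 k k (n1 t) (n2 t) (fun i => X i ω) (fun i => Y i ω))
      atTop
      (fun _ => (1 - κ) * (∑ p, ∑ q, deltaVec S1 p * C1 p q * deltaVec S1 q) + κ * (∑ p, ∑ q, deltaVec S2 p * C2m p q * deltaVec S2 q)) := by
  classical
  have hsym1 : ∀ a b, S1 a b = S1 b a := by
    intro a b; rw [hS1, hS1]
    exact integral_congr_ae (Eventually.of_forall fun ω => by ring)
  have hsym2 : ∀ a b, S2 a b = S2 b a := by
    intro a b; rw [hS2, hS2]
    exact integral_congr_ae (Eventually.of_forall fun ω => by ring)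
  have hone1 : oneSum (unvec (vecm S1)) ≠ 0 := by
    rw [oneSum_unvec_vecm S1 hsym1]; exact ne_of_gt hpos1
  have hone2 : oneSum (unvec (vecm S2)) ≠ 0 := by
    rw [oneSum_unvec_vecm S2 hsym2]; exact ne_of_gt hpos2
  -- strong laws for the empirical moments of the first sample
  have s1X : ∀ a : Fin k, ∀ᵐ ω ∂μ,
      Tendsto (fun n => avg n fun i => X i ω a) atTop (nhds 0) := by
    intro a
    have h := slln μ X hmeasX hindepX hidX hmomX (fun x => x a)
      (measurable_pi_apply a) (fun x => abs_prod1_le x a)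
    refine h.mono fun ω hω => ?_
    simpa [hmeanX a] using hω
  have s2X : ∀ a b : Fin k, ∀ᵐ ω ∂μ,
      Tendsto (fun n => avg n fun i => X i ω a * X i ω b) atTop (nhds (S1 a b)) := by
    intro a b
    have h := slln μ X hmeasX hindepX hidX hmomX (fun x => x a * x b)
      ((measurable_pi_apply a).mul (measurable_pi_apply b)) (fun x => abs_prod2_le x a b)
    refine h.mono fun ω hω => ?_
    simpa only [← hS1 a b] using hω
  have s3X : ∀ a b c : Fin k, ∀ᵐ ω ∂μ,
      Tendsto (fun n => avg n fun i => X i ω a * X i ω b * X i ω c) atTop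
        (nhds (∫ ω', X 0 ω' a * X 0 ω' b * X 0 ω' c ∂μ)) := by
    intro a b c
    have h := slln μ X hmeasX hindepX hidX hmomX (fun x => x a * x b * x c)
      (((measurable_pi_apply a).mul (measurable_pi_apply b)).mul (measurable_pi_apply c))
      (fun x => abs_prod3_le x a b c)
    exact h
  have s4X : ∀ a b c d : Fin k, ∀ᵐ ω ∂μ,
      Tendsto (fun n => avg n fun i => X i ω a * X i ω b * X i ω c * X i ω d) atTop
        (nhds (∫ ω', X 0 ω' a * X 0 ω' b * X 0 ω' c * X 0 ω' d ∂μ)) := by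
    intro a b c d
    have h := slln μ X hmeasX hindepX hidX hmomX (fun x => x a * x b * x c * x d)
      ((((measurable_pi_apply a).mul (measurable_pi_apply b)).mul
        (measurable_pi_apply c)).mul (measurable_pi_apply d))
      (fun x => abs_prod4_le x a b c d)
    exact h
  have s1Y : ∀ a : Fin k, ∀ᵐ ω ∂μ,
      Tendsto (fun n => avg n fun i => Y i ω a) atTop (nhds 0) := by
    intro a
    have h := slln μ Y hmeasY hindepY hidY hmomY (fun x => x a)
      (measurable_pi_apply a) (fun x => abs_prod1_le x a)
    refine h.mono fun ω hω => ?_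
    simpa [hmeanY a] using hω
  have s2Y : ∀ a b : Fin k, ∀ᵐ ω ∂μ,
      Tendsto (fun n => avg n fun i => Y i ω a * Y i ω b) atTop (nhds (S2 a b)) := by
    intro a b
    have h := slln μ Y hmeasY hindepY hidY hmomY (fun x => x a * x b)
      ((measurable_pi_apply a).mul (measurable_pi_apply b)) (fun x => abs_prod2_le x a b)
    refine h.mono fun ω hω => ?_
    simpa only [← hS2 a b] using hω
  have s3Y : ∀ a b c : Fin k, ∀ᵐ ω ∂μ,
      Tendsto (fun n => avg n fun i => Y i ω a * Y i ω b * Y i ω c) atTop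
        (nhds (∫ ω', Y 0 ω' a * Y 0 ω' b * Y 0 ω' c ∂μ)) := by
    intro a b c
    exact slln μ Y hmeasY hindepY hidY hmomY (fun x => x a * x b * x c)
      (((measurable_pi_apply a).mul (measurable_pi_apply b)).mul (measurable_pi_apply c))
      (fun x => abs_prod3_le x a b c)
  have s4Y : ∀ a b c d : Fin k, ∀ᵐ ω ∂μ,
      Tendsto (fun n => avg n fun i => Y i ω a * Y i ω b * Y i ω c * Y i ω d) atTop
        (nhds (∫ ω', Y 0 ω' a * Y 0 ω' b * Y 0 ω' c * Y 0 ω' d ∂μ)) := by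
    intro a b c d
    exact slln μ Y hmeasY hindepY hidY hmomY (fun x => x a * x b * x c * x d)
      ((((measurable_pi_apply a).mul (measurable_pi_apply b)).mul
        (measurable_pi_apply c)).mul (measurable_pi_apply d))
      (fun x => abs_prod4_le x a b c d)
  have H1X := ae_all_iff.2 s1X
  have H2X := ae_all_iff.2 fun a => ae_all_iff.2 (s2X a)
  have H3X := ae_all_iff.2 fun a => ae_all_iff.2 fun b => ae_all_iff.2 (s3X a b)
  have H4X := ae_all_iff.2 fun a => ae_all_iff.2 fun b => ae_all_iff.2 fun c =>
    ae_all_iff.2 (s4X a b c)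
  have H1Y := ae_all_iff.2 s1Y
  have H2Y := ae_all_iff.2 fun a => ae_all_iff.2 (s2Y a)
  have H3Y := ae_all_iff.2 fun a => ae_all_iff.2 fun b => ae_all_iff.2 (s3Y a b)
  have H4Y := ae_all_iff.2 fun a => ae_all_iff.2 fun b => ae_all_iff.2 fun c =>
    ae_all_iff.2 (s4Y a b c)
  have hval1 : (∑ p : SymIdx k, ∑ q : SymIdx k, deltaVec S1 p * C1 p q * deltaVec S1 q)
      = ∑ p : SymIdx k, ∑ q : SymIdx k, deltaVec S1 p * deltaVec S1 q *
        ((∫ ω', X 0 ω' p.1.1 * X 0 ω' p.1.2 * X 0 ω' q.1.1 * X 0 ω' q.1.2 ∂μ)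
          - S1 p.1.1 p.1.2 * S1 q.1.1 q.1.2) := by
    refine Finset.sum_congr rfl fun p _ => Finset.sum_congr rfl fun q _ => ?_
    rw [moments_cov μ (X 0) (hmeasX 0) hmomX S1 hS1 C1 hC1 p q]
    simp only [vecm]
    ring
  have hval2 : (∑ p : SymIdx k, ∑ q : SymIdx k, deltaVec S2 p * C2m p q * deltaVec S2 q)
      = ∑ p : SymIdx k, ∑ q : SymIdx k, deltaVec S2 p * deltaVec S2 q *
        ((∫ ω', Y 0 ω' p.1.1 * Y 0 ω' p.1.2 * Y 0 ω' q.1.1 * Y 0 ω' q.1.2 ∂μ)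
          - S2 p.1.1 p.1.2 * S2 q.1.1 q.1.2) := by
    refine Finset.sum_congr rfl fun p _ => Finset.sum_congr rfl fun q _ => ?_
    rw [moments_cov μ (Y 0) (hmeasY 0) hmomY S2 hS2 C2m hC2 p q]
    simp only [vecm]
    ring
  refine tendstoInMeasure_of_tendsto_ae (fun t => ?_) ?_
  · exact (((meas_est k (n1 t) X hmeasX).const_mul
      ((n2 t : ℝ) / ((n1 t : ℝ) + (n2 t : ℝ)))).add
      ((meas_est k (n2 t) Y hmeasY).const_mul
      ((n1 t : ℝ) / ((n1 t : ℝ) + (n2 t : ℝ))))).aestronglyMeasurable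
  · filter_upwards [H1X, H2X, H3X, H4X, H1Y, H2Y, H3Y, H4Y]
      with ω c1X c2X c3X c4X c1Y c2Y c3Y c4Y
    have hinv1 : Tendsto (fun t => 1 / (n1 t : ℝ)) atTop (nhds 0) :=
      tendsto_one_div_atTop_nhds_zero_nat.comp hn1
    have hinv2 : Tendsto (fun t => 1 / (n2 t : ℝ)) atTop (nhds 0) :=
      tendsto_one_div_atTop_nhds_zero_nat.comp hn2
    have E1 : Tendsto (fun t => Phi k (1 / (n1 t : ℝ)) (A1 (n1 t) fun i => X i ω)
        (A2 (n1 t) fun i => X i ω) (A3 (n1 t) fun i => X i ω) (A4 (n1 t) fun i => X i ω))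
        atTop (nhds (∑ p : SymIdx k, ∑ q : SymIdx k, deltaVec S1 p * deltaVec S1 q *
          ((∫ ω', X 0 ω' p.1.1 * X 0 ω' p.1.2 * X 0 ω' q.1.1 * X 0 ω' q.1.2 ∂μ)
            - S1 p.1.1 p.1.2 * S1 q.1.1 q.1.2))) :=
      tendsto_Phi k S1 hone1
        (fun a b c => ∫ ω', X 0 ω' a * X 0 ω' b * X 0 ω' c ∂μ)
        (fun a b c d => ∫ ω', X 0 ω' a * X 0 ω' b * X 0 ω' c * X 0 ω' d ∂μ)
        _ _ _ _ _ hinv1 (fun a => (c1X a).comp hn1) (fun a b => (c2X a b).comp hn1)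
        (fun a b c => (c3X a b c).comp hn1) (fun a b c d => (c4X a b c d).comp hn1)
    have E2 : Tendsto (fun t => Phi k (1 / (n2 t : ℝ)) (A1 (n2 t) fun i => Y i ω)
        (A2 (n2 t) fun i => Y i ω) (A3 (n2 t) fun i => Y i ω) (A4 (n2 t) fun i => Y i ω))
        atTop (nhds (∑ p : SymIdx k, ∑ q : SymIdx k, deltaVec S2 p * deltaVec S2 q *
          ((∫ ω', Y 0 ω' p.1.1 * Y 0 ω' p.1.2 * Y 0 ω' q.1.1 * Y 0 ω' q.1.2 ∂μ)
            - S2 p.1.1 p.1.2 * S2 q.1.1 q.1.2))) :=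
      tendsto_Phi k S2 hone2
        (fun a b c => ∫ ω', Y 0 ω' a * Y 0 ω' b * Y 0 ω' c ∂μ)
        (fun a b c d => ∫ ω', Y 0 ω' a * Y 0 ω' b * Y 0 ω' c * Y 0 ω' d ∂μ)
        _ _ _ _ _ hinv2 (fun a => (c1Y a).comp hn2) (fun a b => (c2Y a b).comp hn2)
        (fun a b c => (c3Y a b c).comp hn2) (fun a b c d => (c4Y a b c d).comp hn2)
    have hev1 : ∀ᶠ t in atTop, 2 ≤ n1 t := hn1.eventually_ge_atTop 2
    have hev2 : ∀ᶠ t in atTop, 2 ≤ n2 t := hn2.eventually_ge_atTop 2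
    have E1' : Tendsto (fun t => ((n1 t : ℝ) - 1)⁻¹ * ∑ i ∈ range (n1 t),
        (∑ p, deltaVec (sampleCov k (n1 t) fun i => X i ω) p *
          (vecm (outer fun a => X i ω a - sampleMean k (n1 t) (fun i => X i ω) a) p
            - vecm (sampleCov k (n1 t) fun i => X i ω) p)) ^ 2) atTop
        (nhds (∑ p : SymIdx k, ∑ q : SymIdx k, deltaVec S1 p * deltaVec S1 q *
          ((∫ ω', X 0 ω' p.1.1 * X 0 ω' p.1.2 * X 0 ω' q.1.1 * X 0 ω' q.1.2 ∂μ)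
            - S1 p.1.1 p.1.2 * S1 q.1.1 q.1.2))) := by
      refine Tendsto.congr' ?_ E1
      filter_upwards [hev1] with t ht
      exact (onesample_eq ht fun i => X i ω).symm
    have E2' : Tendsto (fun t => ((n2 t : ℝ) - 1)⁻¹ * ∑ i ∈ range (n2 t),
        (∑ p, deltaVec (sampleCov k (n2 t) fun i => Y i ω) p *
          (vecm (outer fun a => Y i ω a - sampleMean k (n2 t) (fun i => Y i ω) a) p
            - vecm (sampleCov k (n2 t) fun i => Y i ω) p)) ^ 2) atTop
        (nhds (∑ p : SymIdx k, ∑ q : SymIdx k, deltaVec S2 p * deltaVec S2 q *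
          ((∫ ω', Y 0 ω' p.1.1 * Y 0 ω' p.1.2 * Y 0 ω' q.1.1 * Y 0 ω' q.1.2 ∂μ)
            - S2 p.1.1 p.1.2 * S2 q.1.1 q.1.2))) := by
      refine Tendsto.congr' ?_ E2
      filter_upwards [hev2] with t ht
      exact (onesample_eq ht fun i => Y i ω).symm
    have hNpos : ∀ᶠ t in atTop, (0 : ℝ) < (n1 t : ℝ) + (n2 t : ℝ) := by
      filter_upwards [hn1.eventually_ge_atTop 1] with t ht
      have h1 : (1 : ℝ) ≤ (n1 t : ℝ) := by exact_mod_cast ht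
      have h0 : (0 : ℝ) ≤ (n2 t : ℝ) := by positivity
      linarith
    have hc2 : Tendsto (fun t => (n2 t : ℝ) / ((n1 t : ℝ) + (n2 t : ℝ))) atTop
        (nhds (1 - κ)) := by
      have heq : (fun t => 1 - (n1 t : ℝ) / ((n1 t : ℝ) + (n2 t : ℝ)))
          =ᶠ[atTop] fun t => (n2 t : ℝ) / ((n1 t : ℝ) + (n2 t : ℝ)) := by
        filter_upwards [hNpos] with t ht
        field_simp
        ring
      exact Tendsto.congr' heq (tendsto_const_nhds.sub hratio)
    have HH := (hc2.mul E1').add (hratio.mul E2')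
    rw [hval1, hval2]
    exact HH
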